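/- D(A) = {u ∈ D* : Γ₁u = 0 and Γ₂u = 0}, and for every u in this set Ã*u = Au, i.e. Ã*u = (x ↦ x u(x)) + ⟨u, φ⟩ψ; thus A is the restriction of Ã* to ker Γ₁ ∩ ker Γ₂. Moreover, the modified Green formula holds: for all f, g ∈ D*, ⟨A*f, g⟩ − ⟨f, Ã*g⟩ = Γ₁f·conj(Γ₂g) − Γ₂f·conj(Γ₁g). -/

import Mathlib

open MeasureTheory Filter

/-- The (paper-convention) `L²(ℝ)` inner product `⟨f,g⟩ = ∫ f · conj g`,
linear in the first argument. -/
noncomputable def ip (f g : ℝ → ℂ) : ℂ :=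
  ∫ x : ℝ, f x * (starRingEnd ℂ) (g x)

/-- The boundary operator `Γ₁`, evaluated on `g ∈ D*` with associated constant `c = c_g`:
`Γ₁ g = ∫_ℝ ( g(x) − c·sign(x)·(x²+1)^{−1/2} ) dx`. -/
noncomputable def Gam1 (g : ℝ → ℂ) (c : ℂ) : ℂ :=
  ∫ x : ℝ, (g x - c * ((Real.sign x : ℝ) : ℂ) * (((Real.sqrt (x ^ 2 + 1) : ℝ) : ℂ))⁻¹)

lemma measurable_realSign : Measurable Real.sign := by
  have : Real.sign = fun r : ℝ => if r < 0 then (-1 : ℝ) else if 0 < r then 1 else 0 := rfl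
  rw [this]
  exact Measurable.ite (measurableSet_lt measurable_id measurable_const)
    measurable_const (Measurable.ite (measurableSet_lt measurable_const measurable_id)
      measurable_const measurable_const)

lemma sign_mul_self' (x : ℝ) : Real.sign x * x = |x| := by
  rcases lt_trichotomy x 0 with h | h | h
  · rw [Real.sign_of_neg h, abs_of_neg h]; ring
  · simp [h]
  · rw [Real.sign_of_pos h, abs_of_pos h]; ring

lemma abs_realSign_le_one (x : ℝ) : |Real.sign x| ≤ 1 := by
  rcases Real.sign_apply_eq x with h | h | h <;> simp [h]

lemma memL2_invsqrt :
    MemLp (fun x : ℝ => (((Real.sqrt (x ^ 2 + 1) : ℝ) : ℂ))⁻¹) 2 (volume : Measure ℝ) := by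
  have hcont : Continuous fun x : ℝ => (((Real.sqrt (x ^ 2 + 1) : ℝ) : ℂ))⁻¹ := by
    apply Continuous.inv₀
    · exact Complex.continuous_ofReal.comp
        (Real.continuous_sqrt.comp (by continuity))
    · intro x
      have h1 : (1 : ℝ) ≤ Real.sqrt (x ^ 2 + 1) := by
        have h2 := Real.sqrt_le_sqrt (show (1:ℝ) ≤ x ^ 2 + 1 by nlinarith [sq_nonneg x])
        rwa [Real.sqrt_one] at h2
      simp only [ne_eq, Complex.ofReal_eq_zero]
      intro h; rw [h] at h1; linarith
  rw [memLp_two_iff_integrable_sq_norm hcont.aestronglyMeasurable]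
  have : (fun x : ℝ => ‖(((Real.sqrt (x ^ 2 + 1) : ℝ) : ℂ))⁻¹‖ ^ 2)
      = fun x : ℝ => (1 + x ^ 2)⁻¹ := by
    funext x
    have hpos : (0:ℝ) ≤ x ^ 2 + 1 := by positivity
    rw [norm_inv, Complex.norm_real, Real.norm_eq_abs,
      abs_of_nonneg (Real.sqrt_nonneg _), inv_pow, Real.sq_sqrt hpos, add_comm]
  rw [this]
  exact integrable_inv_one_add_sq

lemma integrable_mul2 {f g : ℝ → ℂ} (hf : MemLp f 2 (volume : Measure ℝ))
    (hg : MemLp g 2 (volume : Measure ℝ)) :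
    Integrable (fun x => f x * g x) (volume : Measure ℝ) := by
  rw [← memLp_one_iff_integrable]
  have := hg.smul (φ := f) hf (p := 2) (q := 2) (r := 1)
    (hpqr := ⟨by rw [ENNReal.inv_two_add_inv_two, inv_one]⟩)
  exact this

lemma memℒp_conj {g : ℝ → ℂ} (hg : MemLp g 2 (volume : Measure ℝ)) :
    MemLp (fun x => (starRingEnd ℂ) (g x)) 2 (volume : Measure ℝ) := by
  refine MemLp.of_le hg (continuous_star.comp_aestronglyMeasurable hg.1) ?_
  filter_upwards with x
  simp [RCLike.norm_conj]

/-- Key integrability lemma: if `f ∈ L²` and `x f(x) − c ∈ L²`, then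
`f(x) − c·sign(x)/√(x²+1)` is integrable on `ℝ`. -/
lemma integrable_sub_sign {f : ℝ → ℂ} {c : ℂ} (hf : MemLp f 2 (volume : Measure ℝ))
    (hF : MemLp (fun x : ℝ => (x : ℂ) * f x - c) 2 (volume : Measure ℝ)) :
    Integrable (fun x : ℝ =>
      f x - c * ((Real.sign x : ℝ) : ℂ) * (((Real.sqrt (x ^ 2 + 1) : ℝ) : ℂ))⁻¹)
      (volume : Measure ℝ) := by
  set h : ℝ → ℂ := fun x =>
    ((Real.sqrt (x ^ 2 + 1) - |x| : ℝ) : ℂ) * f x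
      + ((Real.sign x : ℝ) : ℂ) * ((x : ℂ) * f x - c) with hh_def
  have hbound : ∀ x : ℝ, 0 ≤ Real.sqrt (x ^ 2 + 1) - |x| ∧ Real.sqrt (x ^ 2 + 1) - |x| ≤ 1 := by
    intro x
    have h1 : |x| ≤ Real.sqrt (x ^ 2 + 1) := by
      rw [← Real.sqrt_sq_eq_abs]
      exact Real.sqrt_le_sqrt (by linarith)
    have h2 : Real.sqrt (x ^ 2 + 1) ≤ |x| + 1 := by
      rw [show x ^ 2 + 1 = |x| ^ 2 + 1 by rw [sq_abs]]
      have := Real.sqrt_le_sqrt (show |x| ^ 2 + 1 ≤ (|x| + 1) ^ 2 by nlinarith [abs_nonneg x])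
      rwa [Real.sqrt_sq (by positivity)] at this
    constructor <;> linarith
  have hmem1 : MemLp (fun x : ℝ => ((Real.sqrt (x ^ 2 + 1) - |x| : ℝ) : ℂ) * f x) 2
      (volume : Measure ℝ) := by
    refine MemLp.of_le hf ?_ ?_
    · exact ((Complex.continuous_ofReal.comp
        ((Real.continuous_sqrt.comp (by continuity)).sub
          continuous_abs)).aestronglyMeasurable).mul hf.1
    · filter_upwards with x
      rw [norm_mul, Complex.norm_real, Real.norm_eq_abs,
        abs_of_nonneg (hbound x).1]
      calc (Real.sqrt (x ^ 2 + 1) - |x|) * ‖f x‖ ≤ 1 * ‖f x‖ :=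
            mul_le_mul_of_nonneg_right (hbound x).2 (norm_nonneg _)
        _ = ‖f x‖ := one_mul _
  have hmem2 : MemLp (fun x : ℝ => ((Real.sign x : ℝ) : ℂ) * ((x : ℂ) * f x - c)) 2
      (volume : Measure ℝ) := by
    refine MemLp.of_le hF ?_ ?_
    · exact ((Complex.measurable_ofReal.comp measurable_realSign).aestronglyMeasurable).mul hF.1
    · filter_upwards with x
      rw [norm_mul, Complex.norm_real, Real.norm_eq_abs]
      calc |Real.sign x| * ‖(x : ℂ) * f x - c‖ ≤ 1 * ‖(x : ℂ) * f x - c‖ :=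
            mul_le_mul_of_nonneg_right (abs_realSign_le_one x) (norm_nonneg _)
        _ = ‖(x : ℂ) * f x - c‖ := one_mul _
  have hh : MemLp h 2 (volume : Measure ℝ) := hmem1.add hmem2
  have hint : Integrable (fun x : ℝ =>
      (((Real.sqrt (x ^ 2 + 1) : ℝ) : ℂ))⁻¹ * h x) (volume : Measure ℝ) :=
    integrable_mul2 memL2_invsqrt hh
  refine hint.congr (ae_of_all _ fun x => ?_)
  have hupos : 0 < Real.sqrt (x ^ 2 + 1) := Real.sqrt_pos.mpr (by positivity)
  have hu0 : ((Real.sqrt (x ^ 2 + 1) : ℝ) : ℂ) ≠ 0 := by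
    simpa [Complex.ofReal_eq_zero] using ne_of_gt hupos
  have habs : ((|x| : ℝ) : ℂ) = ((Real.sign x : ℝ) : ℂ) * (x : ℂ) := by
    rw [← sign_mul_self' x]; push_cast; ring
  simp only [hh_def]
  rw [Complex.ofReal_sub, habs]
  field_simp
  ring

/-- If `f ∈ L²` and `x f(x) ∈ L²` then `f` is integrable. -/
lemma integrable_of_memL2 {f : ℝ → ℂ} (hf : MemLp f 2 (volume : Measure ℝ))
    (hxf : MemLp (fun x : ℝ => (x : ℂ) * f x) 2 (volume : Measure ℝ)) :
    Integrable f (volume : Measure ℝ) := by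
  have hF : MemLp (fun x : ℝ => (x : ℂ) * f x - (0 : ℂ)) 2 (volume : Measure ℝ) := by
    simpa using hxf
  have := integrable_sub_sign hf hF
  simpa using this

theorem stmt17 (φ ψ : ℝ → ℂ)
    (hφ : MemLp φ 2 (volume : Measure ℝ)) (hψ : MemLp ψ 2 (volume : Measure ℝ)) :
    -- `D(A) = {u ∈ D* : Γ₁ u = 0 ∧ Γ₂ u = 0}`
    ({f : Lp ℂ 2 (volume : Measure ℝ) |
        MemLp (fun x : ℝ => (x : ℂ) * f x) 2 (volume : Measure ℝ) ∧
        Tendsto (fun R : ℝ => ∫ x in (-R)..R, f x) atTop (nhds 0)} =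
      {f : Lp ℂ 2 (volume : Measure ℝ) | ∃ c : ℂ,
        MemLp (fun x : ℝ => (x : ℂ) * f x - c) 2 (volume : Measure ℝ) ∧
        Gam1 (⇑f) c = 0 ∧ c = 0}) ∧
    -- on this set, `Ã* u = A u = (x ↦ x u(x)) + ⟨u,φ⟩ ψ`
    (∀ f : Lp ℂ 2 (volume : Measure ℝ),
      MemLp (fun x : ℝ => (x : ℂ) * f x) 2 (volume : Measure ℝ) →
      Tendsto (fun R : ℝ => ∫ x in (-R)..R, f x) atTop (nhds 0) →
      ∀ c : ℂ, MemLp (fun x : ℝ => (x : ℂ) * f x - c) 2 (volume : Measure ℝ) →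
        (fun x : ℝ => ((x : ℂ) * f x - c) + ip (⇑f) φ * ψ x) =
          fun x : ℝ => (x : ℂ) * f x + ip (⇑f) φ * ψ x) ∧
    -- modified Green formula: `⟨A*f, g⟩ − ⟨f, Ã*g⟩ = Γ₁f·conj(Γ₂g) − Γ₂f·conj(Γ₁g)`
    (∀ (f g : ℝ → ℂ) (cf cg : ℂ),
      MemLp f 2 (volume : Measure ℝ) →
      MemLp (fun x : ℝ => (x : ℂ) * f x - cf) 2 (volume : Measure ℝ) →
      MemLp g 2 (volume : Measure ℝ) →
      MemLp (fun x : ℝ => (x : ℂ) * g x - cg) 2 (volume : Measure ℝ) →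
        ip (fun x : ℝ => ((x : ℂ) * f x - cf) + ip f ψ * φ x) g -
            ip f (fun x : ℝ => ((x : ℂ) * g x - cg) + ip g φ * ψ x) =
          Gam1 f cf * (starRingEnd ℂ) cg - cf * (starRingEnd ℂ) (Gam1 g cg)) := by
  refine ⟨?_, ?_, ?_⟩
  · -- part 1
    ext f
    simp only [Set.mem_setOf_eq]
    constructor
    · rintro ⟨hxf, hlim⟩
      have hint : Integrable (⇑f) (volume : Measure ℝ) :=
        integrable_of_memL2 (Lp.memLp f) hxf
      have h0 : ∫ x : ℝ, f x = 0 :=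
        tendsto_nhds_unique
          (intervalIntegral_tendsto_integral hint tendsto_neg_atTop_atBot tendsto_id) hlim
      exact ⟨0, by simpa using hxf, by simpa [Gam1] using h0, rfl⟩
    · rintro ⟨c, hF, hGam, rfl⟩
      have hxf : MemLp (fun x : ℝ => (x : ℂ) * f x) 2 (volume : Measure ℝ) := by
        simpa using hF
      have hint : Integrable (⇑f) (volume : Measure ℝ) :=
        integrable_of_memL2 (Lp.memLp f) hxf
      have h0 : ∫ x : ℝ, f x = 0 := by simpa [Gam1] using hGam
      refine ⟨hxf, ?_⟩
      have := intervalIntegral_tendsto_integral hint tendsto_neg_atTop_atBot tendsto_id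
      rwa [h0] at this
  · -- part 2
    intro f hxf _ c hc
    have hconst : MemLp (fun _ : ℝ => c) 2 (volume : Measure ℝ) := by
      have h2 := hxf.sub hc
      have hfun : ((fun x : ℝ => (x : ℂ) * f x) - fun x : ℝ => (x : ℂ) * f x - c)
          = fun _ : ℝ => c := by funext x; simp
      rwa [hfun] at h2
    have hc0 : c = 0 := by
      rcases (memLp_const_iff (by norm_num) (by norm_num)).mp hconst with h | h
      · exact h
      · rw [Real.volume_univ] at h; exact absurd h (by simp)
    funext x
    rw [hc0]
    ring
  · -- part 3: Green's formula
    intro f g cf cg hf hF hg hG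
    set s : ℝ → ℂ := fun x =>
      ((Real.sign x : ℝ) : ℂ) * (((Real.sqrt (x ^ 2 + 1) : ℝ) : ℂ))⁻¹ with hs_def
    have hconjs : ∀ x, (starRingEnd ℂ) (s x) = s x := by
      intro x
      simp [hs_def, map_mul, map_inv₀, Complex.conj_ofReal]
    have intFg : Integrable (fun x : ℝ => ((x : ℂ) * f x - cf) * (starRingEnd ℂ) (g x))
        (volume : Measure ℝ) := integrable_mul2 hF (memℒp_conj hg)
    have intfG : Integrable (fun x : ℝ => f x * (starRingEnd ℂ) ((x : ℂ) * g x - cg))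
        (volume : Measure ℝ) := integrable_mul2 hf (memℒp_conj hG)
    have intφg : Integrable (fun x : ℝ => φ x * (starRingEnd ℂ) (g x))
        (volume : Measure ℝ) := integrable_mul2 hφ (memℒp_conj hg)
    have intfψ : Integrable (fun x : ℝ => f x * (starRingEnd ℂ) (ψ x))
        (volume : Measure ℝ) := integrable_mul2 hf (memℒp_conj hψ)
    have isf : Integrable (fun x : ℝ => f x - cf * s x) (volume : Measure ℝ) := by
      have := integrable_sub_sign hf hF
      refine this.congr (ae_of_all _ fun x => ?_)
      simp [hs_def, mul_assoc]
    have isg : Integrable (fun x : ℝ => g x - cg * s x) (volume : Measure ℝ) := by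
      have := integrable_sub_sign hg hG
      refine this.congr (ae_of_all _ fun x => ?_)
      simp [hs_def, mul_assoc]
    have isgc : Integrable (fun x : ℝ => (starRingEnd ℂ) (g x - cg * s x))
        (volume : Measure ℝ) := by
      rw [← memLp_one_iff_integrable] at isg ⊢
      refine MemLp.of_le isg (continuous_star.comp_aestronglyMeasurable isg.1) ?_
      filter_upwards with x
      exact le_of_eq (RCLike.norm_conj _)
    -- expand the two inner products
    have e1 : ip (fun x : ℝ => ((x : ℂ) * f x - cf) + ip f ψ * φ x) g =
        (∫ x : ℝ, ((x : ℂ) * f x - cf) * (starRingEnd ℂ) (g x)) + ip f ψ * ip φ g := by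
      unfold ip
      have hpt : ∀ x : ℝ, (((x : ℂ) * f x - cf) + (∫ y : ℝ, f y * (starRingEnd ℂ) (ψ y)) * φ x)
          * (starRingEnd ℂ) (g x)
          = ((x : ℂ) * f x - cf) * (starRingEnd ℂ) (g x)
            + (∫ y : ℝ, f y * (starRingEnd ℂ) (ψ y)) * (φ x * (starRingEnd ℂ) (g x)) := by
        intro x; ring
      simp only [hpt]
      rw [integral_add intFg (intφg.const_mul _), integral_const_mul]
    have e2 : ip f (fun x : ℝ => ((x : ℂ) * g x - cg) + ip g φ * ψ x) =
        (∫ x : ℝ, f x * (starRingEnd ℂ) ((x : ℂ) * g x - cg))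
          + (starRingEnd ℂ) (ip g φ) * ip f ψ := by
      unfold ip
      have hpt : ∀ x : ℝ, f x * (starRingEnd ℂ)
          (((x : ℂ) * g x - cg) + (∫ y : ℝ, g y * (starRingEnd ℂ) (φ y)) * ψ x)
          = f x * (starRingEnd ℂ) ((x : ℂ) * g x - cg)
            + (starRingEnd ℂ) (∫ y : ℝ, g y * (starRingEnd ℂ) (φ y))
              * (f x * (starRingEnd ℂ) (ψ x)) := by
        intro x; rw [map_add, map_mul]; ring
      simp only [hpt]
      rw [integral_add intfG (intfψ.const_mul _), integral_const_mul]
    have hb : (starRingEnd ℂ) (ip g φ) = ip φ g := by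
      unfold ip
      rw [← integral_conj]
      congr 1
      funext x
      rw [map_mul, Complex.conj_conj]
      ring
    have e3 : (∫ x : ℝ, ((x : ℂ) * f x - cf) * (starRingEnd ℂ) (g x))
        - (∫ x : ℝ, f x * (starRingEnd ℂ) ((x : ℂ) * g x - cg))
        = ∫ x : ℝ, ((starRingEnd ℂ) cg * (f x - cf * s x)
            - cf * (starRingEnd ℂ) (g x - cg * s x)) := by
      rw [← integral_sub intFg intfG]
      congr 1
      funext x
      simp only [map_sub, map_mul, hconjs, Complex.conj_ofReal]
      ring
    have e4 : (∫ x : ℝ, ((starRingEnd ℂ) cg * (f x - cf * s x)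
          - cf * (starRingEnd ℂ) (g x - cg * s x)))
        = (starRingEnd ℂ) cg * Gam1 f cf - cf * (starRingEnd ℂ) (Gam1 g cg) := by
      rw [integral_sub ((isf).const_mul _) ((isgc).const_mul _),
        integral_const_mul, integral_const_mul, integral_conj]
      have hgf : Gam1 f cf = ∫ x : ℝ, (f x - cf * s x) := by
        unfold Gam1
        congr 1; funext x; simp only [hs_def]; ring
      have hgg : Gam1 g cg = ∫ x : ℝ, (g x - cg * s x) := by
        unfold Gam1
        congr 1; funext x; simp only [hs_def]; ring
      rw [hgf, hgg]
    rw [e1, e2, hb]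
    have : ip f ψ * ip φ g - ip φ g * ip f ψ = 0 := by ring
    calc (∫ x : ℝ, ((x : ℂ) * f x - cf) * (starRingEnd ℂ) (g x)) + ip f ψ * ip φ g
        - ((∫ x : ℝ, f x * (starRingEnd ℂ) ((x : ℂ) * g x - cg)) + ip φ g * ip f ψ)
        = (∫ x : ℝ, ((x : ℂ) * f x - cf) * (starRingEnd ℂ) (g x))
          - (∫ x : ℝ, f x * (starRingEnd ℂ) ((x : ℂ) * g x - cg)) := by ring
      _ = (starRingEnd ℂ) cg * Gam1 f cf - cf * (starRingEnd ℂ) (Gam1 g cg) := by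
          rw [e3, e4]
      _ = Gam1 f cf * (starRingEnd ℂ) cg - cf * (starRingEnd ℂ) (Gam1 g cg) := by ring
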